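/- In the flat-cone setup: for each k ∈ {0, …, n−2} there exist constants C, r > 0 such that |a(z)| ≤ C·|z − z_k|^{2α_k − 1} for all z with 0 < |z − z_k| < r; and there exist constants C′, R > 0 such that |a(z)| ≤ C′·|z|^{1 − 2α_{n−1}} for all z with |z| ≥ R. -/

import Mathlib

open MeasureTheory Complex Finset

/-- An integrable holomorphic quadratic differential coefficient
`ψ(z) = Σ_{k=0}^{n−2} ρ_k/(z − z_k)` with marked points `z_k = k`. -/
noncomputable def psiQ (n : ℕ) (ρ : ℕ → ℂ) (z : ℂ) : ℂ :=
  ∑ k ∈ Finset.range (n - 1), ρ k / (z - (k : ℂ))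

/-- `a(z) = conj(ψ(z)) · ∏_{k=0}^{n−2} |z − z_k|^{2α_k}` in the flat-cone setup. -/
noncomputable def acone (n : ℕ) (α : ℕ → ℝ) (ρ : ℕ → ℂ) (z : ℂ) : ℂ :=
  (starRingEnd ℂ) (psiQ n ρ z) *
    ((∏ k ∈ Finset.range (n - 1), ‖z - (k : ℂ)‖ ^ (2 * α k) : ℝ) : ℂ)

lemma one_le_abs_nat_sub {j k : ℕ} (h : j ≠ k) :
    (1:ℝ) ≤ ‖(j:ℂ) - (k:ℂ)‖ := by
  rw [← Complex.ofReal_natCast j, ← Complex.ofReal_natCast k, ← Complex.ofReal_sub,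
    Complex.norm_real, Real.norm_eq_abs]
  have h0 : ((j:ℤ) - (k:ℤ)) ≠ 0 := sub_ne_zero.mpr (by exact_mod_cast h)
  have h1 : (1:ℤ) ≤ |(j:ℤ) - (k:ℤ)| := Int.one_le_abs h0
  have e : ((|(j:ℤ) - (k:ℤ)| : ℤ) : ℝ) = |(j:ℝ) - (k:ℝ)| := by
    push_cast [Int.cast_abs]; ring_nf
  calc (1:ℝ) ≤ ((|(j:ℤ) - (k:ℤ)| : ℤ) : ℝ) := by exact_mod_cast h1
    _ = |(j:ℝ) - (k:ℝ)| := e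

lemma abs_acone_eq (n : ℕ) (α : ℕ → ℝ) (ρ : ℕ → ℂ) (z : ℂ) :
    ‖acone n α ρ z‖ =
      ‖psiQ n ρ z‖ *
        ∏ j ∈ Finset.range (n - 1), ‖z - (j:ℂ)‖ ^ (2 * α j) := by
  rw [acone, norm_mul, Complex.norm_conj, Complex.norm_real, Real.norm_eq_abs]
  congr 1
  exact _root_.abs_of_nonneg (Finset.prod_nonneg fun j _ =>
    Real.rpow_nonneg (norm_nonneg _) _)

set_option maxHeartbeats 1000000 in
/-- in the flat-cone setup, `|a(z)| = O(|z − z_k|^{2α_k − 1})` near each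
puncture `z_k` (`k ≤ n−2`), and `|a(z)| = O(|z|^{1 − 2α_{n−1}})` as `z → ∞`. -/
theorem stmt_16 (n : ℕ) (hn : 3 < n) (α : ℕ → ℝ)
    (hα : ∀ k < n, 0 < α k ∧ α k < 1)
    (hsum : ∑ k ∈ Finset.range n, α k = 2)
    (ρ : ℕ → ℂ)
    (hρ0 : ∑ k ∈ Finset.range (n - 1), ρ k = 0)
    (hρ1 : ∑ k ∈ Finset.range (n - 1), ρ k * (k : ℂ) = 0) :
    (∀ k < n - 1, ∃ C r : ℝ, 0 < C ∧ 0 < r ∧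
      ∀ z : ℂ, 0 < ‖z - (k : ℂ)‖ → ‖z - (k : ℂ)‖ < r →
        ‖acone n α ρ z‖ ≤ C * ‖z - (k : ℂ)‖ ^ (2 * α k - 1)) ∧
    (∃ C' R : ℝ, 0 < C' ∧ 0 < R ∧
      ∀ z : ℂ, R ≤ ‖z‖ →
        ‖acone n α ρ z‖ ≤ C' * ‖z‖ ^ (1 - 2 * α (n - 1))) := by
  have hB : (0:ℝ) ≤ ∑ j ∈ Finset.range (n - 1), ‖ρ j‖ :=
    Finset.sum_nonneg fun j _ => norm_nonneg _
  set B : ℝ := ∑ j ∈ Finset.range (n - 1), ‖ρ j‖ with hBdef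
  constructor
  · -- near each puncture
    intro k hk
    have hPpos : (0:ℝ) < ((n+1:ℝ)^2)^(n-1) := by positivity
    refine ⟨(2*B+1) * ((n+1:ℝ)^2)^(n-1), 1/2, by nlinarith, by norm_num, ?_⟩
    intro z h0 hr
    have hkn : k < n := by omega
    -- bound on psi
    have hψ : ‖psiQ n ρ z‖ ≤ (2*B) / ‖z - (k:ℂ)‖ := by
      have key : ∀ j ∈ Finset.range (n-1),
          ‖ρ j / (z - (j:ℂ))‖ ≤
            2 * ‖ρ j‖ / ‖z - (k:ℂ)‖ := by
        intro j hj
        rw [norm_div]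
        have hρnn : (0:ℝ) ≤ ‖ρ j‖ := norm_nonneg _
        rcases eq_or_ne j k with hjk | hjk
        · subst hjk
          rw [div_le_div_iff₀ h0 h0]
          nlinarith
        · have h1 : (1:ℝ) ≤ ‖(j:ℂ) - (k:ℂ)‖ := one_le_abs_nat_sub hjk
          have htri : ‖(j:ℂ) - (k:ℂ)‖ ≤
              ‖(j:ℂ) - z‖ + ‖z - (k:ℂ)‖ :=
            norm_sub_le_norm_sub_add_norm_sub _ _ _
          have hms : ‖(j:ℂ) - z‖ = ‖z - (j:ℂ)‖ :=
            norm_sub_rev _ _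
          have h2 : (1:ℝ)/2 ≤ ‖z - (j:ℂ)‖ := by
            rw [hms] at htri; linarith
          have h3 : ‖ρ j‖ / ‖z - (j:ℂ)‖ ≤ 2 * ‖ρ j‖ := by
            rw [div_le_iff₀ (by linarith)]
            nlinarith
          have h4 : 2 * ‖ρ j‖ ≤ 2 * ‖ρ j‖ / ‖z - (k:ℂ)‖ := by
            rw [le_div_iff₀ h0]
            nlinarith
          linarith
      calc ‖psiQ n ρ z‖
          ≤ ∑ j ∈ Finset.range (n-1), ‖ρ j / (z - (j:ℂ))‖ := by
            rw [psiQ]; exact norm_sum_le _ _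
        _ ≤ ∑ j ∈ Finset.range (n-1), 2 * ‖ρ j‖ / ‖z - (k:ℂ)‖ :=
            Finset.sum_le_sum key
        _ = (2*B) / ‖z - (k:ℂ)‖ := by
            rw [← Finset.sum_div, ← Finset.mul_sum]
    -- bound on product
    have hprodsplit : ∏ j ∈ Finset.range (n-1), ‖z - (j:ℂ)‖ ^ (2*α j)
        = ‖z - (k:ℂ)‖ ^ (2*α k) *
          ∏ j ∈ (Finset.range (n-1)).erase k, ‖z - (j:ℂ)‖ ^ (2*α j) :=
      (Finset.mul_prod_erase _ _ (Finset.mem_range.mpr hk)).symm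
    have hQ : ∏ j ∈ (Finset.range (n-1)).erase k, ‖z - (j:ℂ)‖ ^ (2*α j)
        ≤ ((n+1:ℝ)^2)^(n-1) := by
      calc ∏ j ∈ (Finset.range (n-1)).erase k, ‖z - (j:ℂ)‖ ^ (2*α j)
          ≤ ∏ _j ∈ (Finset.range (n-1)).erase k, ((n+1:ℝ)^2) := by
            apply Finset.prod_le_prod
            · exact fun j _ => Real.rpow_nonneg (norm_nonneg _) _
            · intro j hj
              have hjn : j < n := by
                have := Finset.mem_range.mp (Finset.mem_of_mem_erase hj); omega
              have hαj := hα j hjn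
              have hkj : ‖(k:ℂ) - (j:ℂ)‖ ≤ (n:ℝ) := by
                rw [← Complex.ofReal_natCast k, ← Complex.ofReal_natCast j,
                  ← Complex.ofReal_sub, Complex.norm_real, Real.norm_eq_abs]
                have h1 : (k:ℝ) ≤ n := by exact_mod_cast hkn.le
                have h2 : (j:ℝ) ≤ n := by exact_mod_cast hjn.le
                rw [abs_le]
                constructor <;> [nlinarith [Nat.cast_nonneg (α := ℝ) k, Nat.cast_nonneg (α := ℝ) j]; nlinarith [Nat.cast_nonneg (α := ℝ) k, Nat.cast_nonneg (α := ℝ) j]]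
              have hzj : ‖z - (j:ℂ)‖ ≤ (n+1:ℝ) := by
                have htri : ‖z - (j:ℂ)‖ ≤
                    ‖z - (k:ℂ)‖ + ‖(k:ℂ) - (j:ℂ)‖ :=
                  norm_sub_le_norm_sub_add_norm_sub _ _ _
                linarith
              calc ‖z - (j:ℂ)‖ ^ (2*α j) ≤ (n+1:ℝ) ^ (2*α j) :=
                    Real.rpow_le_rpow (norm_nonneg _) hzj (by nlinarith [hαj.1])
                _ ≤ (n+1:ℝ) ^ ((2:ℕ):ℝ) := by
                    apply Real.rpow_le_rpow_of_exponent_le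
                    · have : (1:ℝ) ≤ n := by exact_mod_cast hn.le.trans' (by norm_num)
                      linarith
                    · push_cast; nlinarith [hαj.2]
                _ = (n+1:ℝ)^2 := Real.rpow_natCast _ 2
        _ = ((n+1:ℝ)^2) ^ ((Finset.range (n-1)).erase k).card := Finset.prod_const _
        _ ≤ ((n+1:ℝ)^2)^(n-1) := by
            apply pow_le_pow_right₀
            · nlinarith [Nat.cast_nonneg (α := ℝ) n]
            · rw [Finset.card_erase_of_mem (Finset.mem_range.mpr hk), Finset.card_range]; omega
    have hTnn : (0:ℝ) ≤ ‖z - (k:ℂ)‖ ^ (2*α k) :=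
      Real.rpow_nonneg (norm_nonneg _) _
    calc ‖acone n α ρ z‖
        = ‖psiQ n ρ z‖ *
          ∏ j ∈ Finset.range (n-1), ‖z - (j:ℂ)‖ ^ (2*α j) := abs_acone_eq n α ρ z
      _ ≤ ((2*B) / ‖z - (k:ℂ)‖) *
          (‖z - (k:ℂ)‖ ^ (2*α k) * ((n+1:ℝ)^2)^(n-1)) := by
          apply mul_le_mul hψ ?_ ?_ ?_
          · rw [hprodsplit]; exact mul_le_mul_of_nonneg_left hQ hTnn
          · exact Finset.prod_nonneg fun j _ => Real.rpow_nonneg (norm_nonneg _) _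
          · exact div_nonneg (by linarith) (norm_nonneg _)
      _ = (2*B * ((n+1:ℝ)^2)^(n-1)) *
          (‖z - (k:ℂ)‖ ^ (2*α k) / ‖z - (k:ℂ)‖) := by ring
      _ ≤ ((2*B+1) * ((n+1:ℝ)^2)^(n-1)) *
          (‖z - (k:ℂ)‖ ^ (2*α k) / ‖z - (k:ℂ)‖) := by
          apply mul_le_mul_of_nonneg_right (by nlinarith)
            (div_nonneg hTnn (norm_nonneg _))
      _ = (2*B+1) * ((n+1:ℝ)^2)^(n-1) * ‖z - (k:ℂ)‖ ^ (2*α k - 1) := by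
          rw [Real.rpow_sub h0, Real.rpow_one]
  · -- at infinity
    have hnR : (0:ℝ) < 2 * n := by positivity
    have h2s : (0:ℝ) < (2:ℝ) ^ (4 - 2*α (n-1)) := Real.rpow_pos_of_pos (by norm_num) _
    refine ⟨(2*(n:ℝ)^2*B + 1) * (2:ℝ)^(4 - 2*α (n-1)), 2*n, mul_pos (by nlinarith [mul_nonneg (by positivity : (0:ℝ) ≤ 2*(n:ℝ)^2) hB]) h2s, hnR, ?_⟩
    intro z hu
    have hu0 : (0:ℝ) < ‖z‖ := lt_of_lt_of_le hnR hu
    have hz0 : z ≠ 0 := norm_pos_iff.mp hu0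
    have hjcast : ∀ j ∈ Finset.range (n-1), (j:ℝ) ≤ n := by
      intro j hj
      have := Finset.mem_range.mp hj
      exact_mod_cast (by omega : j ≤ n)
    have hlow : ∀ j ∈ Finset.range (n-1), ‖z‖ / 2 ≤ ‖z - (j:ℂ)‖ := by
      intro j hj
      have htri : ‖z‖ ≤ ‖z - (j:ℂ)‖ + ‖(j:ℂ)‖ := by
        calc ‖z‖ = ‖(z - (j:ℂ)) + (j:ℂ)‖ := by ring_nf
          _ ≤ _ := norm_add_le _ _
      rw [Complex.norm_natCast] at htri
      have := hjcast j hj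
      linarith
    have hne : ∀ j ∈ Finset.range (n-1), z - (j:ℂ) ≠ 0 := by
      intro j hj
      have : (0:ℝ) < ‖z - (j:ℂ)‖ := lt_of_lt_of_le (by linarith) (hlow j hj)
      exact norm_pos_iff.mp this
    -- the key identity using the two moment conditions
    have hid : psiQ n ρ z = ∑ j ∈ Finset.range (n-1), ρ j * (j:ℂ)^2 / ((z - (j:ℂ)) * z^2) := by
      have e1 : ∀ j ∈ Finset.range (n-1), ρ j / (z - (j:ℂ)) =
          ρ j / z + ρ j * (j:ℂ) / z^2 + ρ j * (j:ℂ)^2 / ((z - (j:ℂ)) * z^2) := by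
        intro j hj
        have h1 := hne j hj
        field_simp
        ring
      rw [psiQ, Finset.sum_congr rfl e1, Finset.sum_add_distrib, Finset.sum_add_distrib,
        ← Finset.sum_div, hρ0, ← Finset.sum_div]
      have e2 : ∑ j ∈ Finset.range (n-1), ρ j * (j:ℂ) = 0 := hρ1
      rw [e2]
      simp
    -- bound on psi at infinity
    have hψ2 : ‖psiQ n ρ z‖ ≤ (2*(n:ℝ)^2*B) / ‖z‖ ^ 3 := by
      rw [hid]
      calc ‖∑ j ∈ Finset.range (n-1), ρ j * (j:ℂ)^2 / ((z - (j:ℂ)) * z^2)‖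
          ≤ ∑ j ∈ Finset.range (n-1), ‖ρ j * (j:ℂ)^2 / ((z - (j:ℂ)) * z^2)‖ :=
            norm_sum_le _ _
        _ ≤ ∑ j ∈ Finset.range (n-1), 2*(n:ℝ)^2 * ‖ρ j‖ / ‖z‖ ^ 3 := by
            apply Finset.sum_le_sum
            intro j hj
            rw [norm_div, norm_mul, norm_mul, norm_pow, norm_pow, Complex.norm_natCast]
            have hρnn : (0:ℝ) ≤ ‖ρ j‖ := norm_nonneg _
            have hjn := hjcast j hj
            have hjnn : (0:ℝ) ≤ (j:ℝ) := Nat.cast_nonneg _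
            have hlj := hlow j hj
            have step : ‖ρ j‖ * (j:ℝ)^2 / (‖z - (j:ℂ)‖ * ‖z‖ ^ 2)
                ≤ ‖ρ j‖ * (n:ℝ)^2 / (‖z‖ ^ 3 / 2) := by
              apply div_le_div₀ (by positivity) ?_ (by positivity) ?_
              · exact mul_le_mul_of_nonneg_left (pow_le_pow_left₀ hjnn hjn 2) hρnn
              · nlinarith [sq_nonneg (‖z‖)]
            have eq2 : ‖ρ j‖ * (n:ℝ)^2 / (‖z‖ ^ 3 / 2)
                = 2*(n:ℝ)^2 * ‖ρ j‖ / ‖z‖ ^ 3 := by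
              field_simp
            linarith [step, eq2.ge]
        _ = (2*(n:ℝ)^2*B) / ‖z‖ ^ 3 := by
            rw [← Finset.sum_div, ← Finset.mul_sum]
    -- exponent bookkeeping
    have hsum2 : ∑ j ∈ Finset.range (n-1), 2*α j = 4 - 2*α (n-1) := by
      have hn1 : n - 1 + 1 = n := by omega
      have hs : ∑ j ∈ Finset.range (n-1), α j + α (n-1) = 2 := by
        rw [← Finset.sum_range_succ, hn1, hsum]
      rw [← Finset.mul_sum]
      linarith
    -- product bound at infinity
    have hprod2 : ∏ j ∈ Finset.range (n-1), ‖z - (j:ℂ)‖ ^ (2*α j)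
        ≤ (2 * ‖z‖) ^ (4 - 2*α (n-1)) := by
      rw [← hsum2, Real.rpow_sum_of_pos (by positivity) _ _]
      apply Finset.prod_le_prod
      · exact fun j _ => Real.rpow_nonneg (norm_nonneg _) _
      · intro j hj
        have hjn' : j < n := by have := Finset.mem_range.mp hj; omega
        have hhigh : ‖z - (j:ℂ)‖ ≤ 2 * ‖z‖ := by
          have htri : ‖z - (j:ℂ)‖ ≤ ‖z‖ + ‖(j:ℂ)‖ := by
            simpa using norm_sub_le z ((j:ℂ))
          rw [Complex.norm_natCast] at htri
          have := hjcast j hj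
          linarith
        exact Real.rpow_le_rpow (norm_nonneg _) hhigh
          (by nlinarith [(hα j hjn').1])
    have hBn : (0:ℝ) ≤ 2*(n:ℝ)^2*B := by positivity
    calc ‖acone n α ρ z‖
        = ‖psiQ n ρ z‖ *
          ∏ j ∈ Finset.range (n-1), ‖z - (j:ℂ)‖ ^ (2*α j) := abs_acone_eq n α ρ z
      _ ≤ ((2*(n:ℝ)^2*B) / ‖z‖ ^ 3) * ((2 * ‖z‖) ^ (4 - 2*α (n-1))) := by
          apply mul_le_mul hψ2 hprod2 ?_ ?_
          · exact Finset.prod_nonneg fun j _ => Real.rpow_nonneg (norm_nonneg _) _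
          · exact div_nonneg hBn (by positivity)
      _ = (2*(n:ℝ)^2*B * (2:ℝ)^(4 - 2*α (n-1))) *
          (‖z‖ ^ (4 - 2*α (n-1)) / ‖z‖ ^ 3) := by
          rw [Real.mul_rpow (by norm_num) hu0.le]
          ring
      _ ≤ ((2*(n:ℝ)^2*B + 1) * (2:ℝ)^(4 - 2*α (n-1))) *
          (‖z‖ ^ (4 - 2*α (n-1)) / ‖z‖ ^ 3) := by
          apply mul_le_mul_of_nonneg_right (by nlinarith)
            (div_nonneg (Real.rpow_nonneg (norm_nonneg _) _) (by positivity))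
      _ = ((2*(n:ℝ)^2*B + 1) * (2:ℝ)^(4 - 2*α (n-1))) *
          ‖z‖ ^ (1 - 2*α (n-1)) := by
          rw [← Real.rpow_natCast (‖z‖) 3, ← Real.rpow_sub hu0]
          congr 2
          push_cast
          ring
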